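/- Let k be a nonnegative integer and l a positive integer, and let P_l(X) be the set of x-parking functions of length l for X = (1, k, ..., k): sequences of positive integers whose nondecreasing rearrangement satisfies c_{(i)} ≤ 1 + (i-1)k. Let Z(c) = #{i : c_i = 1}. Then Σ_{c ∈ P_l(X)} q^{Z(c)} = q·(q + lk)^{l-1} as a polynomial identity in q. -/

import Mathlib

open Finset
open scoped Classical

/-- `c` rearranges nondecreasingly so that the `i`-th order statistic is at most `u i`. -/
def SortedLE {n : ℕ} (c u : Fin n → ℕ) : Prop :=
  ∃ σ : Equiv.Perm (Fin n),
    (∀ i j : Fin n, i ≤ j → c (σ i) ≤ c (σ j)) ∧ ∀ i, c (σ i) ≤ u i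

/-- The (finite) set of `(1,k,…,k)`-parking functions of length `l`. -/
noncomputable def xParkFinset (k l : ℕ) : Finset (Fin l → ℕ) :=
  (Fintype.piFinset fun _ : Fin l => Finset.Icc 1 (1 + (l - 1) * k)).filter
    (fun c => SortedLE c (fun i => 1 + i.1 * k))

lemma card_filter_perm {n : ℕ} (c : Fin n → ℕ) (σ : Equiv.Perm (Fin n)) (a : ℕ) :
    (univ.filter fun j => c (σ j) ≤ a).card = (univ.filter fun j => c j ≤ a).card := by
  classical
  rw [← Fintype.card_subtype, ← Fintype.card_subtype]
  exact Fintype.card_congr (σ.subtypeEquiv fun x => Iff.rfl)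

lemma sortedLE_iff {n : ℕ} {c u : Fin n → ℕ} (hu : Monotone u) :
    SortedLE c u ↔ ∀ i : Fin n, (i : ℕ) < (univ.filter fun j => c j ≤ u i).card := by
  constructor
  · rintro ⟨σ, hm, hle⟩ i
    have hmono : Monotone (c ∘ σ) := fun a b hab => hm a b hab
    have := (Tuple.lt_card_le_iff_apply_le_of_monotone (f := c ∘ σ) (a := u i) (j := i) hmono).2 (hle i)
    calc (i:ℕ) < (univ.filter fun x => (c ∘ σ) x ≤ u i).card := this
      _ = _ := card_filter_perm c σ (u i)
  · intro h
    refine ⟨Tuple.sort c, fun a b hab => Tuple.monotone_sort c hab, fun i => ?_⟩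
    have hmono : Monotone (c ∘ Tuple.sort c) := Tuple.monotone_sort c
    have := h i
    rw [← card_filter_perm c (Tuple.sort c) (u i)] at this
    exact (Tuple.lt_card_le_iff_apply_le_of_monotone (f := c ∘ Tuple.sort c) (a := u i) (j := i) hmono).1 this

lemma mem_xParkFinset {k l : ℕ} (c : Fin l → ℕ) :
    c ∈ xParkFinset k l ↔ (∀ i, 1 ≤ c i) ∧
      ∀ s : Fin l, (s : ℕ) < (univ.filter fun j => c j ≤ 1 + s.1 * k).card := by
  have hu : Monotone (fun i : Fin l => 1 + i.1 * k) := by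
    intro a b hab
    simp only []
    have : a.1 ≤ b.1 := hab
    nlinarith
  rw [xParkFinset, mem_filter, Fintype.mem_piFinset, sortedLE_iff hu]
  constructor
  · rintro ⟨h1, h2⟩
    exact ⟨fun i => (mem_Icc.1 (h1 i)).1, h2⟩
  · rintro ⟨h1, h2⟩
    refine ⟨fun i => mem_Icc.2 ⟨h1 i, ?_⟩, h2⟩
    -- upper bound from the last counting condition
    have hl : 0 < l := Fin.pos i
    have hs := h2 ⟨l - 1, by omega⟩
    simp only [Fin.val_mk] at hs
    have hcard : (univ.filter fun j => c j ≤ 1 + (l-1) * k).card = l := by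
      have hle : (univ.filter fun j => c j ≤ 1 + (l-1) * k).card ≤ l := by
        simpa using card_filter_le (univ : Finset (Fin l)) _
      omega
    have : (univ.filter fun j => c j ≤ 1 + (l-1) * k) = univ := by
      apply eq_univ_of_card _ (by simpa using hcard)
    have := this ▸ (mem_univ i)
    simpa using (mem_filter.1 this).2

noncomputable def phi (k : ℕ) {l m : ℕ} (A : Finset (Fin l)) (hm : (Aᶜ : Finset (Fin l)).card = m)
    (c : Fin l → ℕ) : Fin m → ℕ := fun i =>
  if c ((Aᶜ).orderIsoOfFin hm i) ≤ 1 + A.card * k then 1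
  else c ((Aᶜ).orderIsoOfFin hm i) - A.card * k

lemma phi_key (k : ℕ) {l m : ℕ} (A : Finset (Fin l)) (hm : (Aᶜ : Finset (Fin l)).card = m)
    (c : Fin l → ℕ) (r : ℕ) (i : Fin m) :
    c ((Aᶜ).orderIsoOfFin hm i) ≤ 1 + (A.card + r) * k ↔ phi k A hm c i ≤ 1 + r * k := by
  unfold phi
  split_ifs with h
  · simp only [add_mul]
    constructor
    · intro _; omega
    · intro _
      have : A.card * k ≤ A.card * k + r * k := Nat.le_add_right _ _
      omega
  · simp only [add_mul]
    push_neg at h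
    generalize hA : A.card * k = a at *
    generalize hB : r * k = b at *
    omega

lemma count_eq (k : ℕ) {l m : ℕ} (A : Finset (Fin l)) (hm : (Aᶜ : Finset (Fin l)).card = m)
    (c : Fin l → ℕ) (hones : ∀ i, c i = 1 ↔ i ∈ A) (r : ℕ) :
    (univ.filter fun x => c x ≤ 1 + (A.card + r) * k).card
      = A.card + (univ.filter fun i => phi k A hm c i ≤ 1 + r * k).card := by
  classical
  set P : Fin l → Prop := fun x => c x ≤ 1 + (A.card + r) * k with hP
  have hsplit : (univ.filter P).card = (A.filter P).card + ((Aᶜ).filter P).card := by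
    rw [← card_union_of_disjoint (disjoint_filter_filter disjoint_compl_right),
      ← filter_union, union_compl]
  have hAfull : A.filter P = A := by
    apply filter_true_of_mem
    intro x hx
    have : c x = 1 := (hones x).2 hx
    simp [hP, this]
  have hbij : ((Aᶜ).filter P).card = (univ.filter fun i => phi k A hm c i ≤ 1 + r * k).card := by
    symm
    apply Finset.card_bij (fun a _ => ((Aᶜ).orderIsoOfFin hm a : Fin l))
    · intro a ha
      rw [mem_filter] at ha ⊢
      exact ⟨coe_mem _, (phi_key k A hm c r a).2 ha.2⟩
    · intro a _ b _ hab
      exact ((Aᶜ).orderIsoOfFin hm).injective (Subtype.coe_injective hab)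
    · intro x hx
      rw [mem_filter] at hx
      refine ⟨((Aᶜ).orderIsoOfFin hm).symm ⟨x, hx.1⟩, ?_, ?_⟩
      · rw [mem_filter]
        refine ⟨mem_univ _, (phi_key k A hm c r _).1 ?_⟩
        rw [OrderIso.apply_symm_apply]
        exact hx.2
      · rw [OrderIso.apply_symm_apply]
  rw [hsplit, hAfull, hbij]

lemma card_add (k : ℕ) {l m : ℕ} (A : Finset (Fin l)) (hm : (Aᶜ : Finset (Fin l)).card = m) :
    A.card + m = l := by
  have h1 := Finset.card_compl A
  have h2 := Finset.card_le_univ A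
  simp only [Fintype.card_fin] at h1 h2
  omega

lemma park_iff (k : ℕ) {l m : ℕ} (A : Finset (Fin l)) (hm : (Aᶜ : Finset (Fin l)).card = m)
    (c : Fin l → ℕ) (hones : ∀ i, c i = 1 ↔ i ∈ A) :
    (∀ s : Fin l, (s : ℕ) < (univ.filter fun x => c x ≤ 1 + s.1 * k).card) ↔
      (∀ r : Fin m, (r : ℕ) < (univ.filter fun x => phi k A hm c x ≤ 1 + r.1 * k).card) := by
  have hjm : A.card + m = l := card_add k A hm
  constructor
  · intro h r
    have hs : A.card + r.1 < l := by omega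
    have := h ⟨A.card + r.1, hs⟩
    simp only [Fin.val_mk] at this
    rw [count_eq k A hm c hones r.1] at this
    omega
  · intro h s
    by_cases hs : s.1 < A.card
    · have hsub : A ≤ univ.filter fun x => c x ≤ 1 + s.1 * k := by
        intro x hx
        rw [mem_filter]
        refine ⟨mem_univ _, ?_⟩
        rw [(hones x).2 hx]
        omega
      have := Finset.card_le_card hsub
      omega
    · push_neg at hs
      have hr : s.1 - A.card < m := by omega
      have := h ⟨s.1 - A.card, hr⟩
      simp only [Fin.val_mk] at this
      have hrw : s.1 = A.card + (s.1 - A.card) := by omega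
      rw [hrw]
      rw [count_eq k A hm c hones (s.1 - A.card)]
      omega

noncomputable def grid (k : ℕ) {l m : ℕ} (A : Finset (Fin l))
    (hm : (Aᶜ : Finset (Fin l)).card = m) (e : Fin m → ℕ) : Fin l → Finset ℕ := fun i =>
  if h : i ∈ Aᶜ then
    (if e (((Aᶜ).orderIsoOfFin hm).symm ⟨i, h⟩) = 1 then Finset.Icc 2 (1 + A.card * k)
     else {e (((Aᶜ).orderIsoOfFin hm).symm ⟨i, h⟩) + A.card * k})
  else {1}

lemma fiber_eq (k : ℕ) {l m : ℕ} (A : Finset (Fin l)) (hm : (Aᶜ : Finset (Fin l)).card = m)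
    (e : Fin m → ℕ) (he : e ∈ xParkFinset k m) :
    (xParkFinset k l).filter
        (fun c => univ.filter (fun i => c i = 1) = A ∧ phi k A hm c = e)
      = Fintype.piFinset (grid k A hm e) := by
  classical
  obtain ⟨hepos, hecount⟩ := (mem_xParkFinset e).1 he
  ext c
  rw [mem_filter, Fintype.mem_piFinset, mem_xParkFinset]
  constructor
  · rintro ⟨⟨hpos, hcount⟩, honesA, hphi⟩
    have hones : ∀ i, c i = 1 ↔ i ∈ A := by
      intro i
      rw [← honesA, mem_filter]
      simp
    intro i
    unfold grid
    split_ifs with h h1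
    · -- i ∈ Aᶜ, e value is 1
      set i' := ((Aᶜ).orderIsoOfFin hm).symm ⟨i, h⟩ with hi'
      have hoi : c (((Aᶜ).orderIsoOfFin hm) i') = c i := by
        rw [hi', OrderIso.apply_symm_apply]
      have hci : ¬ (c i = 1) := fun hc => (mem_compl.1 h) ((hones i).1 hc)
      have hc2 : 2 ≤ c i := by have := hpos i; omega
      have hle : c i ≤ 1 + A.card * k := by
        by_contra hgt
        have : phi k A hm c i' = c (((Aᶜ).orderIsoOfFin hm) i') - A.card * k := by
          unfold phi
          rw [if_neg (by rw [hoi]; exact hgt)]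
        rw [hphi, hoi] at this
        rw [h1] at this
        omega
      exact mem_Icc.2 ⟨hc2, hle⟩
    · -- i ∈ Aᶜ, e value ≥ 2
      set i' := ((Aᶜ).orderIsoOfFin hm).symm ⟨i, h⟩ with hi'
      have hoi : c (((Aᶜ).orderIsoOfFin hm) i') = c i := by
        rw [hi', OrderIso.apply_symm_apply]
      have hgt : ¬ (c i ≤ 1 + A.card * k) := by
        intro hle
        have : phi k A hm c i' = 1 := by
          unfold phi
          rw [if_pos (by rw [hoi]; exact hle)]
        rw [hphi] at this
        exact h1 this
      have : phi k A hm c i' = c i - A.card * k := by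
        unfold phi
        rw [hoi, if_neg hgt]
      rw [hphi] at this
      rw [mem_singleton]
      omega
    · -- i ∈ A
      rw [mem_singleton]
      exact (hones i).2 (by simpa using h)
  · intro hpi
    have hval : ∀ (i : Fin l) (h : i ∈ Aᶜ),
        (e (((Aᶜ).orderIsoOfFin hm).symm ⟨i, h⟩) = 1 ∧ 2 ≤ c i ∧ c i ≤ 1 + A.card * k) ∨
        (e (((Aᶜ).orderIsoOfFin hm).symm ⟨i, h⟩) ≠ 1 ∧
          c i = e (((Aᶜ).orderIsoOfFin hm).symm ⟨i, h⟩) + A.card * k) := by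
      intro i h
      have := hpi i
      unfold grid at this
      rw [dif_pos h] at this
      split_ifs at this with h1
      · exact Or.inl ⟨h1, (mem_Icc.1 this).1, (mem_Icc.1 this).2⟩
      · exact Or.inr ⟨h1, mem_singleton.1 this⟩
    have hvalA : ∀ i ∈ A, c i = 1 := by
      intro i hi
      have := hpi i
      unfold grid at this
      rw [dif_neg (by simpa using hi)] at this
      exact mem_singleton.1 this
    have hones : ∀ i, c i = 1 ↔ i ∈ A := by
      intro i
      constructor
      · intro hc
        by_contra hA
        rcases hval i (mem_compl.2 hA) with ⟨_, h2, _⟩ | ⟨hne, heq⟩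
        · omega
        · have := hepos (((Aᶜ).orderIsoOfFin hm).symm ⟨i, mem_compl.2 hA⟩)
          omega
      · exact hvalA i
    have hpos : ∀ i, 1 ≤ c i := by
      intro i
      by_cases hA : i ∈ A
      · rw [hvalA i hA]
      · rcases hval i (mem_compl.2 hA) with ⟨_, h2, _⟩ | ⟨hne, heq⟩
        · omega
        · have := hepos (((Aᶜ).orderIsoOfFin hm).symm ⟨i, mem_compl.2 hA⟩)
          omega
    have hphi : phi k A hm c = e := by
      funext i'
      have hmem : ((Aᶜ).orderIsoOfFin hm i' : Fin l) ∈ Aᶜ := coe_mem _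
      have hsymm : ((Aᶜ).orderIsoOfFin hm).symm ⟨((Aᶜ).orderIsoOfFin hm i' : Fin l), hmem⟩ = i' := by
        rw [show (⟨((Aᶜ).orderIsoOfFin hm i' : Fin l), hmem⟩ : {x // x ∈ (Aᶜ : Finset (Fin l))})
            = (Aᶜ).orderIsoOfFin hm i' from Subtype.ext rfl]
        exact OrderIso.symm_apply_apply _ _
      rcases hval _ hmem with ⟨h1, h2, h3⟩ | ⟨hne, heq⟩
      · rw [hsymm] at h1
        unfold phi
        rw [if_pos h3, h1]
      · rw [hsymm] at hne heq
        have he2 : 2 ≤ e i' := by have := hepos i'; omega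
        unfold phi
        rw [if_neg (by omega), heq]
        omega
    refine ⟨⟨hpos, ?_⟩, ?_, hphi⟩
    · rw [park_iff k A hm c hones]
      intro r
      have : (filter (fun x => phi k A hm c x ≤ 1 + r.1 * k) univ)
          = filter (fun x => e x ≤ 1 + r.1 * k) univ := by
        apply filter_congr
        intro x _
        rw [hphi]
      rw [this]
      exact hecount r
    · ext i
      rw [mem_filter]
      simp [hones i]

lemma card_grid (k : ℕ) {l m : ℕ} (A : Finset (Fin l)) (hm : (Aᶜ : Finset (Fin l)).card = m)
    (e : Fin m → ℕ) :
    (Fintype.piFinset (grid k A hm e)).card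
      = (A.card * k) ^ (univ.filter fun i => e i = 1).card := by
  classical
  rw [Fintype.card_piFinset]
  set f : Fin l → ℕ := fun i => (grid k A hm e i).card with hf
  have hsplit : ∏ i : Fin l, f i = (∏ i ∈ Aᶜ, f i) * ∏ i ∈ A, f i := by
    have := Finset.prod_mul_prod_compl (Aᶜ) f
    rw [compl_compl] at this
    exact this.symm
  have hprodA : ∏ i ∈ A, f i = 1 := by
    apply Finset.prod_eq_one
    intro i hi
    have hni : ¬ i ∈ (Aᶜ : Finset (Fin l)) := by simp [hi]
    simp only [hf, grid]
    rw [dif_neg hni]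
    exact card_singleton 1
  have hval : ∀ i' : Fin m, f ((Aᶜ).orderIsoOfFin hm i') = if e i' = 1 then A.card * k else 1 := by
    intro i'
    have hmem : ((Aᶜ).orderIsoOfFin hm i' : Fin l) ∈ Aᶜ := coe_mem _
    have hsymm : ((Aᶜ).orderIsoOfFin hm).symm ⟨((Aᶜ).orderIsoOfFin hm i' : Fin l), hmem⟩ = i' := by
      rw [show (⟨((Aᶜ).orderIsoOfFin hm i' : Fin l), hmem⟩ : {x // x ∈ (Aᶜ : Finset (Fin l))})
          = (Aᶜ).orderIsoOfFin hm i' from Subtype.ext rfl]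
      exact OrderIso.symm_apply_apply _ _
    simp only [hf, grid, dif_pos hmem, hsymm]
    split_ifs with h1
    · rw [Nat.card_Icc]
      omega
    · exact card_singleton _
  have hprodAc : ∏ i ∈ Aᶜ, f i = (A.card * k) ^ (univ.filter fun i => e i = 1).card := by
    rw [← Finset.prod_coe_sort (Aᶜ) f,
      ← Equiv.prod_comp ((Aᶜ).orderIsoOfFin hm).toEquiv (fun x : {x // x ∈ (Aᶜ : Finset (Fin l))} => f x)]
    have : ∀ i' : Fin m,
        (fun x : {x // x ∈ (Aᶜ : Finset (Fin l))} => f x) (((Aᶜ).orderIsoOfFin hm).toEquiv i')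
          = if e i' = 1 then A.card * k else 1 := fun i' => hval i'
    rw [Finset.prod_congr rfl (fun i' _ => this i')]
    rw [← Finset.prod_filter_mul_prod_filter_not univ (fun i => e i = 1)]
    rw [Finset.prod_congr rfl (fun i hi => if_pos (mem_filter.1 hi).2), Finset.prod_const]
    rw [Finset.prod_congr rfl (fun i hi => if_neg (mem_filter.1 hi).2), Finset.prod_const_one,
      mul_one]
  rw [hsplit, hprodA, hprodAc, mul_one]

lemma card_fiber (k : ℕ) {l m : ℕ} (A : Finset (Fin l)) (hm : (Aᶜ : Finset (Fin l)).card = m) :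
    ((xParkFinset k l).filter (fun c => univ.filter (fun i => c i = 1) = A)).card
      = ∑ e ∈ xParkFinset k m, (A.card * k) ^ (univ.filter fun i => e i = 1).card := by
  classical
  rw [Finset.card_eq_sum_card_fiberwise (f := phi k A hm) (t := xParkFinset k m) ?_]
  · apply Finset.sum_congr rfl
    intro e he
    rw [Finset.filter_filter, fiber_eq k A hm e he, card_grid k A hm e]
  · intro c hc
    rw [Finset.mem_coe, mem_filter] at hc
    obtain ⟨hcpark, honesA⟩ := hc
    obtain ⟨hpos, hcount⟩ := (mem_xParkFinset c).1 hcpark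
    have hones : ∀ i, c i = 1 ↔ i ∈ A := by
      intro i
      rw [← honesA, mem_filter]
      simp
    rw [Finset.mem_coe, mem_xParkFinset]
    constructor
    · intro i
      unfold phi
      split_ifs with h
      · exact le_refl 1
      · omega
    · exact (park_iff k A hm c hones).1 hcount

lemma xParkZero (k : ℕ) : (xParkFinset k 0).card = 1 := by
  have h : xParkFinset k 0 = Fintype.piFinset (fun _ : Fin 0 => Finset.Icc 1 (1 + (0 - 1) * k)) := by
    apply filter_true_of_mem
    intro c _
    exact ⟨Equiv.refl _, fun i => i.elim0, fun i => i.elim0⟩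
  rw [h, Fintype.card_piFinset]
  simp

theorem q_analogue_aux (k : ℕ) : ∀ l, 0 < l → ∀ q : ℝ,
    ∑ c ∈ xParkFinset k l, q ^ (Finset.univ.filter (fun i => c i = 1)).card =
      q * (q + l * k) ^ (l - 1) := by
  intro l
  induction l using Nat.strong_induction_on with
  | _ l IH =>
  intro hl q
  set G : ℕ → ℝ := fun j => if j = 0 then 0 else if j = l then 1
    else ((j : ℝ) * k) * (((l : ℝ) * k)) ^ (l - j - 1) with hG
  clear_value G
  have hmaps : ∀ c ∈ xParkFinset k l,
      (univ.filter fun i => c i = 1) ∈ (univ : Finset (Fin l)).powerset :=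
    fun c _ => mem_powerset.2 (subset_univ _)
  rw [← Finset.sum_fiberwise_of_maps_to hmaps
    (fun c => q ^ (univ.filter fun i => c i = 1).card)]
  have hfib : ∀ A ∈ (univ : Finset (Fin l)).powerset,
      (∑ c ∈ (xParkFinset k l).filter (fun c => univ.filter (fun i => c i = 1) = A),
        q ^ (univ.filter fun i => c i = 1).card) = G A.card * q ^ A.card := by
    intro A _
    have hconst : ∀ c ∈ (xParkFinset k l).filter (fun c => univ.filter (fun i => c i = 1) = A),
        q ^ (univ.filter fun i => c i = 1).card = q ^ A.card := by
      intro c hc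
      rw [(mem_filter.1 hc).2]
    rw [Finset.sum_congr rfl hconst, Finset.sum_const, nsmul_eq_mul]
    congr 1
    have hjle : A.card ≤ l := by
      have := Finset.card_le_univ A
      simpa using this
    by_cases hj0 : A.card = 0
    · -- A empty: fiber is empty
      have hA : A = ∅ := card_eq_zero.1 hj0
      have hemp : (xParkFinset k l).filter (fun c => univ.filter (fun i => c i = 1) = A) = ∅ := by
        rw [eq_empty_iff_forall_notMem]
        intro c hc
        rw [mem_filter] at hc
        obtain ⟨hpos, hcount⟩ := (mem_xParkFinset c).1 hc.1
        have h0 := hcount ⟨0, hl⟩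
        simp only [Fin.val_mk, Nat.zero_mul, Nat.add_zero] at h0
        obtain ⟨x, hx⟩ := Finset.card_pos.1 h0
        rw [mem_filter] at hx
        have hcx : c x = 1 := by have h1 := hpos x; have h2 := hx.2; omega
        have : x ∈ (univ.filter fun i => c i = 1) := mem_filter.2 ⟨mem_univ _, hcx⟩
        rw [hc.2, hA] at this
        exact notMem_empty x this
      rw [hemp]
      simp [hG, hj0]
    · by_cases hjl : A.card = l
      · -- complement empty
        have hm : (Aᶜ : Finset (Fin l)).card = 0 := by
          rw [Finset.card_compl]
          simp [hjl]
        have hcards := card_fiber k A hm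
        have hone : ∀ e ∈ xParkFinset k 0,
            (A.card * k) ^ (univ.filter fun i => e i = 1).card = 1 := by
          intro e _
          rw [Finset.univ_eq_empty]
          simp
        rw [Finset.sum_congr rfl hone, Finset.sum_const, smul_eq_mul, mul_one,
          xParkZero k] at hcards
        rw [hcards]
        simp only [hG, if_neg hj0, if_pos hjl]
        norm_num
      · -- 0 < A.card < l
        have hm : (Aᶜ : Finset (Fin l)).card = l - A.card := by
          rw [Finset.card_compl]
          simp
        have hm0 : 0 < l - A.card := by omega
        have hml : l - A.card < l := by omega
        have hcards := card_fiber k A hm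
        have hIH := IH (l - A.card) hml hm0 ((A.card * k : ℕ) : ℝ)
        have hcast : (((xParkFinset k l).filter
            (fun c => univ.filter (fun i => c i = 1) = A)).card : ℝ)
            = ∑ e ∈ xParkFinset k (l - A.card),
              ((A.card * k : ℕ) : ℝ) ^ (univ.filter fun i => e i = 1).card := by
          rw [hcards]
          push_cast
          ring
        rw [hcast, hIH]
        have hlm : ((A.card * k : ℕ) : ℝ) + ((l - A.card : ℕ) : ℝ) * k = (l : ℝ) * k := by
          have h1 : (A.card : ℝ) + ((l - A.card : ℕ) : ℝ) = l := by
            exact_mod_cast Nat.add_sub_cancel' hjle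
          push_cast at h1 ⊢
          nlinarith [h1]
        rw [hlm]
        have hexp : l - A.card - 1 = l - A.card - 1 := rfl
        simp only [hG, if_neg hj0, if_neg hjl]
        push_cast
        ring
  rw [Finset.sum_congr rfl hfib]
  rw [Finset.sum_powerset_apply_card (fun j => G j * q ^ j)]
  simp only [card_univ, Fintype.card_fin]
  have h11 : l - 1 + 1 = l := by omega
  have hrhs : (q + (l : ℝ) * k) ^ (l - 1)
      = ∑ s ∈ range l, q ^ s * ((l : ℝ) * k) ^ (l - 1 - s) * (Nat.choose (l-1) s) := by
    rw [add_pow, h11]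
  rw [hrhs, Finset.mul_sum]
  rw [Finset.sum_range_succ']
  have h0 : Nat.choose l 0 • (G 0 * q ^ 0) = 0 := by
    simp [hG]
  rw [h0, add_zero]
  apply Finset.sum_congr rfl
  intro s hs
  rw [mem_range] at hs
  rw [nsmul_eq_mul]
  by_cases hsl : s + 1 = l
  · have hs' : s = l - 1 := by omega
    subst hs'
    rw [hsl]
    simp only [hG, if_neg (by omega : ¬ l = 0), if_pos rfl]
    rw [Nat.choose_self, Nat.choose_self]
    have he0 : l - 1 - (l - 1) = 0 := by omega
    rw [he0]
    rw [show l = (l - 1) + 1 from by omega]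
    push_cast
    ring
  · -- s + 1 < l
    have hs2 : s + 1 < l := by omega
    simp only [hG, if_neg (by omega : ¬ s + 1 = 0), if_neg hsl]
    have hch : ((l : ℝ)) * (Nat.choose (l-1) s) = (Nat.choose l (s+1)) * ((s+1 : ℕ) : ℝ) := by
      have h2 := Nat.add_one_mul_choose_eq (l-1) s
      have hl1 : l - 1 + 1 = l := by omega
      rw [hl1] at h2
      exact_mod_cast congrArg (Nat.cast : ℕ → ℝ) h2
    have hexp : l - 1 - s = (l - (s+1) - 1) + 1 := by omega
    rw [hexp, pow_succ]
    push_cast at hch ⊢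
    linear_combination (-(q^(s+1) * (k:ℝ) * (((l:ℝ))*(k:ℝ))^(l - (s+1) - 1))) * hch

theorem q_analogue_one_k_parking (k l : ℕ) (hl : 0 < l) (q : ℝ) :
    ∑ c ∈ xParkFinset k l, q ^ (Finset.univ.filter (fun i => c i = 1)).card =
      q * (q + l * k) ^ (l - 1) := by
  exact q_analogue_aux k l hl q
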